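/- arXiv:2403.07878 — 2 statements merged into one kernel-verified Lean document; each statement's English description precedes it below -/
import Mathlib

section
/- For any integers r, s, t and non-negative integer n: sum_{k=0}^n binom(n,k) * (-1)^(r(n-k)) * F_r^(k+2) * F_s^(n-k) * F_{s(k+2)-r(n-k)+t} / (k+2) = ((-1)^(t+1) * F_s^(n+2) * F_{r(n+2)-t} - F_t * F_{r+s}^(n+2)) / ((n+1)(n+2)) + F_r * F_{s+t} * F_{r+s}^(n+1) / (n+1). -/
open Finset Real goldenRatio

/-- Lucas numbers on naturals. -/
def lucasNat : ℕ → ℤ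
  | 0 => 2
  | 1 => 1
  | n + 2 => lucasNat (n + 1) + lucasNat n

/-- Fibonacci numbers extended to integer indices: `F_{-m} = (-1)^(m-1) F_m`. -/
def fibZ (n : ℤ) : ℤ :=
  if 0 ≤ n then (Nat.fib n.toNat : ℤ) else (-1) ^ ((-n).toNat + 1) * (Nat.fib (-n).toNat : ℤ)

/-- Lucas numbers extended to integer indices: `L_{-m} = (-1)^m L_m`. -/
def lucasZ (n : ℤ) : ℤ :=
  if 0 ≤ n then lucasNat n.toNat else (-1) ^ (-n).toNat * lucasNat (-n).toNat

lemma sqrt5_ne : (Real.sqrt 5) ≠ 0 := by positivity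

lemma fibZ_eq (m : ℤ) : (fibZ m : ℝ) = (φ ^ m - ψ ^ m) / Real.sqrt 5 := by
  rcases le_or_gt 0 m with h | h
  · lift m to ℕ using h
    simp only [fibZ, if_pos (by positivity : (0:ℤ) ≤ (m:ℤ)), Int.toNat_natCast]
    rw [zpow_natCast, zpow_natCast]
    exact_mod_cast Real.coe_fib_eq m
  · obtain ⟨j, hj⟩ : ∃ j : ℕ, m = -(j:ℤ) := ⟨(-m).toNat, by omega⟩
    subst hj
    have hj0 : ¬ (0:ℤ) ≤ -(j:ℤ) := by omega
    simp only [fibZ, if_neg hj0, neg_neg, Int.toNat_natCast]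
    have h1 : φ ^ (-(j:ℤ)) = (-1)^j * ψ ^ j := by
      rw [zpow_neg, zpow_natCast, ← inv_pow, inv_goldenRatio, neg_pow]
    have h2 : ψ ^ (-(j:ℤ)) = (-1)^j * φ ^ j := by
      rw [zpow_neg, zpow_natCast, ← inv_pow, inv_goldenConj, neg_pow]
    rw [h1, h2]
    push_cast
    rw [Real.coe_fib_eq]
    ring

lemma phipsi (m : ℤ) : φ ^ m * ψ ^ m = (-1:ℝ) ^ m := by
  rw [← mul_zpow, goldenRatio_mul_goldenConj]

lemma L3 (u v : ℤ) : φ ^ u * ψ ^ v - ψ ^ u * φ ^ v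
    = (-1:ℝ) ^ v * Real.sqrt 5 * (fibZ (u - v) : ℝ) := by
  obtain ⟨w, rfl⟩ : ∃ w, u = w + v := ⟨u - v, by ring⟩
  rw [add_sub_cancel_right, fibZ_eq, ← phipsi v,
    zpow_add₀ goldenRatio_ne_zero, zpow_add₀ goldenConj_ne_zero]
  have h5 := sqrt5_ne
  generalize φ ^ w = a
  generalize φ ^ v = b
  generalize ψ ^ w = c
  generalize ψ ^ v = d
  field_simp

lemma addform (x y : ℤ) :
    (fibZ x : ℝ) * φ ^ y + (fibZ y : ℝ) * ψ ^ x = (fibZ (x + y) : ℝ) := by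
  rw [fibZ_eq, fibZ_eq, fibZ_eq, zpow_add₀ goldenRatio_ne_zero, zpow_add₀ goldenConj_ne_zero]
  have h5 := sqrt5_ne
  generalize φ ^ x = a
  generalize φ ^ y = b
  generalize ψ ^ x = c
  generalize ψ ^ y = d
  field_simp
  ring

lemma vajda (r s t : ℤ) :
    (fibZ t : ℝ) * (fibZ (r + s) : ℝ) - (φ ^ r * ψ ^ r) * (fibZ s : ℝ) * (fibZ (t - r) : ℝ)
      = (fibZ r : ℝ) * (fibZ (s + t) : ℝ) := by
  obtain ⟨w, rfl⟩ : ∃ w, t = w + r := ⟨t - r, by ring⟩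
  rw [add_sub_cancel_right]
  simp only [fibZ_eq, zpow_add₀ goldenRatio_ne_zero, zpow_add₀ goldenConj_ne_zero]
  have h5 := sqrt5_ne
  generalize φ ^ r = a
  generalize φ ^ s = b
  generalize φ ^ w = e
  generalize ψ ^ r = c
  generalize ψ ^ s = d
  generalize ψ ^ w = f
  field_simp
  ring

lemma stepA (a b : ℝ) (n : ℕ) :
    ∑ k ∈ range (n + 1), ((n+1).choose (k+1) : ℝ) * a ^ (k+1) * b ^ (n-k)
      = (a + b) ^ (n+1) - b ^ (n+1) := by
  have h := add_pow a b (n+1)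
  rw [Finset.sum_range_succ'] at h
  have e : (∑ k ∈ range (n+1), ((n+1).choose (k+1) : ℝ) * a ^ (k+1) * b ^ (n-k))
      = ∑ k ∈ range (n+1), a ^ (k+1) * b ^ (n+1-(k+1)) * ((n+1).choose (k+1) : ℝ) := by
    apply Finset.sum_congr rfl
    intro k hk
    rw [show n+1-(k+1) = n-k by omega]
    ring
  rw [e, eq_sub_iff_add_eq, h]
  simp

lemma stepB (a b : ℝ) (n : ℕ) :
    ∑ k ∈ range (n + 1), ((n+2).choose (k+2) : ℝ) * a ^ (k+2) * b ^ (n-k)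
      = (a + b) ^ (n+2) - b ^ (n+2) - (n+2) * a * b ^ (n+1) := by
  have h := add_pow a b (n+2)
  rw [Finset.sum_range_succ', Finset.sum_range_succ'] at h
  have e : (∑ k ∈ range (n+1), ((n+2).choose (k+2) : ℝ) * a ^ (k+2) * b ^ (n-k))
      = ∑ k ∈ range (n+1), a ^ (k+1+1) * b ^ (n+2-(k+1+1)) * ((n+2).choose (k+1+1) : ℝ) := by
    apply Finset.sum_congr rfl
    intro k hk
    rw [show n+2-(k+1+1) = n-k by omega]
    ring
  rw [e, h]
  rw [show n+2-(0+1) = n+1 by omega]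
  simp only [zero_add, Nat.choose_one_right, pow_one, pow_zero, one_mul, Nat.sub_zero,
    Nat.choose_zero_right, Nat.cast_one, mul_one, Nat.cast_add, Nat.cast_ofNat]
  ring


lemma stepC (n k : ℕ) :
    (n.choose k : ℝ) / (k+2) = ((n+1).choose (k+1) : ℝ) / (n+1)
      - ((n+2).choose (k+2) : ℝ) / ((n+1)*(n+2)) := by
  have h1 : ((n:ℝ)+1) * (n.choose k : ℝ) = ((n+1).choose (k+1) : ℝ) * ((k:ℝ)+1) := by
    exact_mod_cast Nat.add_one_mul_choose_eq n k
  have h2 : ((n:ℝ)+2) * ((n+1).choose (k+1) : ℝ) = ((n+2).choose (k+2) : ℝ) * ((k:ℝ)+2) := by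
    exact_mod_cast Nat.add_one_mul_choose_eq (n+1) (k+1)
  have hk2 : ((k:ℝ)+2) ≠ 0 := by positivity
  have hn1 : ((n:ℝ)+1) ≠ 0 := by positivity
  have hn2 : ((n:ℝ)+2) ≠ 0 := by positivity
  have key : (n.choose k : ℝ) * (((n:ℝ)+1)*((n:ℝ)+2))
      = ((n+1).choose (k+1) : ℝ) * (((n:ℝ)+2)*((k:ℝ)+2)) - ((n+2).choose (k+2) : ℝ) * ((k:ℝ)+2) := by
    linear_combination ((n:ℝ)+2) * h1 - h2
  field_simp
  linear_combination key

lemma sumP (a b : ℝ) (n : ℕ) :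
    ∑ k ∈ range (n + 1), (n.choose k : ℝ) * a ^ (k+2) * b ^ (n-k) / (k+2)
      = ((a+b)^(n+2) - b^(n+2)) / (n+2) - b * ((a+b)^(n+1) - b^(n+1)) / (n+1) := by
  have e : (∑ k ∈ range (n + 1), (n.choose k : ℝ) * a ^ (k+2) * b ^ (n-k) / (k+2))
      = ∑ k ∈ range (n + 1),
        ((((n+1).choose (k+1) : ℝ) * a ^ (k+1) * b ^ (n-k)) * (a/(n+1))
          - (((n+2).choose (k+2) : ℝ) * a ^ (k+2) * b ^ (n-k)) * (1/((n+1)*(n+2)))) := by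
    apply Finset.sum_congr rfl
    intro k hk
    linear_combination (a ^ (k+2) * b ^ (n-k)) * stepC n k
  rw [e, Finset.sum_sub_distrib, ← Finset.sum_mul, ← Finset.sum_mul, stepA, stepB]
  have hn1 : ((n:ℝ)+1) ≠ 0 := by positivity
  have hn2 : ((n:ℝ)+2) ≠ 0 := by positivity
  field_simp
  ring


lemma negone_sq (u : ℤ) : (-1:ℝ)^u * (-1:ℝ)^u = 1 := by
  rw [← mul_zpow]; norm_num

lemma inv_phi (u : ℤ) : (φ^u)⁻¹ = (-1:ℝ)^u * ψ^u := by
  have h : ((-1:ℝ)^u * ψ^u) * φ^u = 1 := by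
    rw [show ((-1:ℝ)^u * ψ^u) * φ^u = (-1:ℝ)^u * (φ^u * ψ^u) by ring, phipsi, ← mul_zpow]
    norm_num
  exact inv_eq_of_mul_eq_one_left h

lemma inv_psi (u : ℤ) : (ψ^u)⁻¹ = (-1:ℝ)^u * φ^u := by
  have h : ((-1:ℝ)^u * φ^u) * ψ^u = 1 := by
    rw [show ((-1:ℝ)^u * φ^u) * ψ^u = (-1:ℝ)^u * (φ^u * ψ^u) by ring, phipsi, ← mul_zpow]
    norm_num
  exact inv_eq_of_mul_eq_one_left h

theorem stmt_15 (r s t : ℤ) (n : ℕ) :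
    ∑ k ∈ range (n + 1),
      (n.choose k : ℚ) * (-1) ^ (r * ((n : ℤ) - k)) * (fibZ r : ℚ) ^ (k + 2) *
        (fibZ s : ℚ) ^ (n - k) * (fibZ (s * (k + 2) - r * ((n : ℤ) - k) + t) : ℚ) / (k + 2) =
    ((-1) ^ (t + 1) * (fibZ s : ℚ) ^ (n + 2) * (fibZ (r * (n + 2) - t) : ℚ) -
      (fibZ t : ℚ) * (fibZ (r + s) : ℚ) ^ (n + 2)) / ((n + 1) * (n + 2)) +
    (fibZ r : ℚ) * (fibZ (s + t) : ℚ) * (fibZ (r + s) : ℚ) ^ (n + 1) / (n + 1) := by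
  rw [← @Rat.cast_inj ℝ]
  push_cast
  have hsum : ∀ k ∈ Finset.range (n+1),
      (n.choose k : ℝ) * (-1) ^ (r * ((n:ℤ) - (k:ℤ))) * ((fibZ r : ℤ) : ℝ) ^ (k + 2) *
          ((fibZ s : ℤ) : ℝ) ^ (n - k) *
          ((fibZ (s * ((k:ℤ) + 2) - r * ((n:ℤ) - (k:ℤ)) + t) : ℤ) : ℝ) / ((k:ℝ) + 2)
        = (φ^t / Real.sqrt 5) *
            ((n.choose k : ℝ) * (((fibZ r : ℤ):ℝ) * φ^s) ^ (k+2) * (((fibZ s : ℤ):ℝ) * ψ^r) ^ (n-k) / ((k:ℝ)+2))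
          - (ψ^t / Real.sqrt 5) *
            ((n.choose k : ℝ) * (((fibZ r : ℤ):ℝ) * ψ^s) ^ (k+2) * (((fibZ s : ℤ):ℝ) * φ^r) ^ (n-k) / ((k:ℝ)+2)) := by
    intro k hk
    have hkn : k ≤ n := Nat.lt_succ_iff.mp (Finset.mem_range.mp hk)
    rw [show (n:ℤ) - (k:ℤ) = ((n - k : ℕ) : ℤ) by omega]
    set m := n - k with hm
    have hk2 : ((k:ℤ)+2) = ((k+2:ℕ):ℤ) := by push_cast; ring
    have hφs : φ ^ (s*((k:ℤ)+2)) = (φ^s)^(k+2) := by rw [zpow_mul, hk2, zpow_natCast]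
    have hψs : ψ ^ (s*((k:ℤ)+2)) = (ψ^s)^(k+2) := by rw [zpow_mul, hk2, zpow_natCast]
    have hφr : φ ^ (r*((m:ℕ):ℤ)) = (φ^r)^m := by rw [zpow_mul, zpow_natCast]
    have hψr : ψ ^ (r*((m:ℕ):ℤ)) = (ψ^r)^m := by rw [zpow_mul, zpow_natCast]
    have h1 : φ^(s*((k:ℤ)+2) - r*((m:ℕ):ℤ) + t)
        = (-1:ℝ)^(r*((m:ℕ):ℤ)) * ((ψ^r)^m * (φ^s)^(k+2) * φ^t) := by
      rw [show s*((k:ℤ)+2) - r*((m:ℕ):ℤ) + t = (s*((k:ℤ)+2) + t) - r*((m:ℕ):ℤ) by ring,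
        zpow_sub₀ goldenRatio_ne_zero, div_eq_mul_inv, inv_phi, zpow_add₀ goldenRatio_ne_zero, hφs, hψr]
      ring
    have h2 : ψ^(s*((k:ℤ)+2) - r*((m:ℕ):ℤ) + t)
        = (-1:ℝ)^(r*((m:ℕ):ℤ)) * ((φ^r)^m * (ψ^s)^(k+2) * ψ^t) := by
      rw [show s*((k:ℤ)+2) - r*((m:ℕ):ℤ) + t = (s*((k:ℤ)+2) + t) - r*((m:ℕ):ℤ) by ring,
        zpow_sub₀ goldenConj_ne_zero, div_eq_mul_inv, inv_psi, zpow_add₀ goldenConj_ne_zero, hψs, hφr]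
      ring
    rw [fibZ_eq (s * ((k:ℤ)+2) - r*((m:ℕ):ℤ) + t), h1, h2]
    linear_combination ((n.choose k : ℝ) * ((fibZ r : ℤ):ℝ)^(k+2) * ((fibZ s : ℤ):ℝ)^m *
      ((ψ^r)^m * (φ^s)^(k+2) * φ^t - (φ^r)^m * (ψ^s)^(k+2) * ψ^t) *
      (Real.sqrt 5)⁻¹ * (((k:ℝ)+2))⁻¹) * negone_sq (r*((m:ℕ):ℤ))
  rw [Finset.sum_congr rfl hsum, Finset.sum_sub_distrib, ← Finset.mul_sum, ← Finset.mul_sum,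
    sumP, sumP, addform r s]
  have hG' : ((fibZ r:ℤ):ℝ) * ψ^s + ((fibZ s:ℤ):ℝ) * φ^r = ((fibZ (r+s):ℤ):ℝ) := by
    rw [add_comm, addform s r, add_comm s r]
  rw [hG']
  have hx : φ ^ (r*((n:ℤ)+2)) = (φ^r)^(n+2) := by
    rw [zpow_mul, show ((n:ℤ)+2) = ((n+2:ℕ):ℤ) by push_cast; ring, zpow_natCast]
  have hy : ψ ^ (r*((n:ℤ)+2)) = (ψ^r)^(n+2) := by
    rw [zpow_mul, show ((n:ℤ)+2) = ((n+2:ℕ):ℤ) by push_cast; ring, zpow_natCast]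
  have hφt : φ^t ≠ 0 := zpow_ne_zero _ goldenRatio_ne_zero
  have hψt : ψ^t ≠ 0 := zpow_ne_zero _ goldenConj_ne_zero
  have hφr : φ^r ≠ 0 := zpow_ne_zero _ goldenRatio_ne_zero
  have hψr : ψ^r ≠ 0 := zpow_ne_zero _ goldenConj_ne_zero
  have hF1 : ((fibZ (r*((n:ℤ)+2) - t) : ℤ):ℝ)
      = ((φ^r)^(n+2) * ψ^t - (ψ^r)^(n+2) * φ^t) / (φ^t * ψ^t * Real.sqrt 5) := by
    have h := L3 (r*((n:ℤ)+2)) t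
    rw [hx, hy, ← phipsi t] at h
    rw [eq_div_iff (mul_ne_zero (mul_ne_zero hφt hψt) sqrt5_ne)]
    linear_combination -h
  have hFtr : ((fibZ (t - r) : ℤ):ℝ) = (φ^t*ψ^r - ψ^t*φ^r) / (φ^r * ψ^r * Real.sqrt 5) := by
    have h := L3 t r
    rw [← phipsi r] at h
    rw [eq_div_iff (mul_ne_zero (mul_ne_zero hφr hψr) sqrt5_ne)]
    linear_combination -h
  have hFt : ((fibZ t : ℤ):ℝ) = (φ^t - ψ^t)/Real.sqrt 5 := fibZ_eq t
  have hc : (-1:ℝ)^(t+1) = -(φ^t * ψ^t) := by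
    rw [zpow_add₀ (by norm_num : (-1:ℝ) ≠ 0), zpow_one, phipsi]; ring
  rw [← vajda r s t, hc, hF1, hFtr, hFt]
  have hn1 : ((n:ℝ)+1) ≠ 0 := by positivity
  have hn2 : ((n:ℝ)+2) ≠ 0 := by positivity
  set W := φ^t
  set Z := ψ^t
  set X := φ^r
  set Y := ψ^r
  field_simp
  ring
end

section
/- For any even integer s, any integer t, and non-negative integer n: sum_{k=0}^n binom(n,k) * (-1)^k * L_s^(n-k) * F_{2s(k+2)+s(n-k)+t} / (k+2) = (L_s^(n+2) * F_{s(n+2)+t} - F_t) / ((n+1)(n+2)) - F_{2s+t} / (n+1). -/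
open Finset

lemma lucasNat_eq (n : ℕ) : lucasNat n = 2 * (Nat.fib (n+1) : ℤ) - Nat.fib n := by
  induction n using Nat.twoStepInduction with
  | zero => simp [lucasNat]
  | one => norm_num [lucasNat]
  | more n ih1 ih2 =>
    show lucasNat (n+1) + lucasNat n = _
    rw [ih1, ih2]
    have h1 : Nat.fib (n+3) = Nat.fib (n+1) + Nat.fib (n+2) := Nat.fib_add_two
    have h2 : Nat.fib (n+2) = Nat.fib n + Nat.fib (n+1) := Nat.fib_add_two
    push_cast [h1, h2]
    ring

lemma cassini (n : ℕ) : (Nat.fib (n+1) : ℤ)^2 - Nat.fib (n+1) * Nat.fib n - (Nat.fib n : ℤ)^2 = (-1)^n := by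
  induction n with
  | zero => simp
  | succ n ih =>
    have h : Nat.fib (n+2) = Nat.fib n + Nat.fib (n+1) := Nat.fib_add_two
    push_cast [h]
    push_cast at ih
    linear_combination -ih

lemma fib_two_mul_int (n : ℕ) : (Nat.fib (2*n) : ℤ) = Nat.fib n * lucasNat n := by
  have hle : Nat.fib n ≤ 2 * Nat.fib (n+1) := le_trans Nat.fib_le_fib_succ (by omega)
  have h := Nat.fib_two_mul n
  zify [hle] at h
  rw [h, lucasNat_eq]

lemma fib_two_mul_add_one_int (n : ℕ) :
    (Nat.fib (2*n+1) : ℤ) = lucasNat n * Nat.fib (n+1) - (-1)^n := by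
  have h := Nat.fib_two_mul_add_one n
  zify at h
  rw [h, lucasNat_eq]
  linear_combination -cassini n

lemma fib_two_mul_sub_one_int (n : ℕ) :
    (Nat.fib (2*n+1) : ℤ) = lucasNat (n+1) * Nat.fib n - (-1)^(n+1) := by
  have h := Nat.fib_two_mul_add_one n
  zify at h
  have h2 : Nat.fib (n+2) = Nat.fib n + Nat.fib (n+1) := Nat.fib_add_two
  rw [h, lucasNat_eq]
  push_cast [h2]
  linear_combination cassini n

lemma fibZ_natCast (n : ℕ) : fibZ n = Nat.fib n := by
  simp [fibZ]

lemma fibZ_neg_natCast (n : ℕ) : fibZ (-(n:ℤ)) = (-1)^(n+1) * Nat.fib n := by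
  match n with
  | 0 => simp [fibZ]
  | (n+1) =>
    have h : ¬ (0 ≤ -((n+1:ℕ):ℤ)) := by push_cast; omega
    rw [fibZ, if_neg h]
    simp

lemma lucasZ_natCast (n : ℕ) : lucasZ n = lucasNat n := by
  simp [lucasZ]

lemma lucasZ_neg_natCast (n : ℕ) : lucasZ (-(n:ℤ)) = (-1)^n * lucasNat n := by
  match n with
  | 0 => simp [lucasZ]
  | (n+1) =>
    have h : ¬ (0 ≤ -((n+1:ℕ):ℤ)) := by push_cast; omega
    rw [lucasZ, if_neg h]
    simp

lemma fibZ_rec (x : ℤ) : fibZ (x + 2) = fibZ (x + 1) + fibZ x := by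
  obtain ⟨m, rfl | rfl⟩ := Int.eq_nat_or_neg x
  · have h0 : ((m:ℤ)+1) = ((m+1:ℕ):ℤ) := by push_cast; ring
    have h1 : ((m:ℤ)+2) = ((m+2:ℕ):ℤ) := by push_cast; ring
    rw [h0, h1, fibZ_natCast, fibZ_natCast, fibZ_natCast]
    have : Nat.fib (m+2) = Nat.fib m + Nat.fib (m+1) := Nat.fib_add_two
    push_cast [this]; ring
  · match m with
    | 0 => norm_num [fibZ]; decide
    | 1 => norm_num [fibZ]
    | 2 => norm_num [fibZ]; decide
    | (m+3) =>
      have e2 : (-(↑(m+3):ℤ) + 2) = -((m+1:ℕ):ℤ) := by push_cast; ring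
      have e1 : (-(↑(m+3):ℤ) + 1) = -((m+2:ℕ):ℤ) := by push_cast; ring
      rw [e1, e2, fibZ_neg_natCast, fibZ_neg_natCast, fibZ_neg_natCast]
      have : Nat.fib (m+3) = Nat.fib (m+1) + Nat.fib (m+2) := Nat.fib_add_two
      push_cast [this]; ring

lemma fibZ_rec' (x y z : ℤ) (hy : y = x + 1) (hz : z = x + 2) :
    fibZ z = fibZ y + fibZ x := by subst hy hz; exact fibZ_rec x

lemma fibZ_zero : fibZ 0 = 0 := by norm_num [fibZ]
lemma fibZ_one : fibZ 1 = 1 := by norm_num [fibZ]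

lemma shift_zero (s : ℤ) : fibZ (2*s) = lucasZ s * fibZ s := by
  obtain ⟨m, rfl | rfl⟩ := Int.eq_nat_or_neg s
  · have h : (2*(m:ℤ)) = ((2*m:ℕ):ℤ) := by push_cast; ring
    rw [h, fibZ_natCast, fibZ_natCast, lucasZ_natCast, fib_two_mul_int]
    ring
  · have h : (2*(-(m:ℤ))) = -((2*m:ℕ):ℤ) := by push_cast; ring
    rw [h, fibZ_neg_natCast, fibZ_neg_natCast, lucasZ_neg_natCast, fib_two_mul_int]
    have h1 : ((-1:ℤ))^(2*m+1) = -1 := by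
      rw [pow_succ, pow_mul]; norm_num
    have hX : ((-1:ℤ))^m * (-1)^m = 1 := by
      rw [← pow_add, ← two_mul, pow_mul]; norm_num
    rw [h1, pow_succ]
    linear_combination (lucasNat m * (Nat.fib m : ℤ)) * hX

lemma shift_one (s : ℤ) (hs : Even s) : fibZ (1 + 2*s) = lucasZ s * fibZ (1 + s) - 1 := by
  obtain ⟨m, rfl | rfl⟩ := Int.eq_nat_or_neg s
  · have hme : Even m := by rwa [Int.even_coe_nat] at hs
    have h : (1 + 2*(m:ℤ)) = ((2*m+1:ℕ):ℤ) := by push_cast; ring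
    have h2 : (1 + (m:ℤ)) = ((m+1:ℕ):ℤ) := by push_cast; ring
    rw [h, h2, fibZ_natCast, fibZ_natCast, lucasZ_natCast, fib_two_mul_add_one_int,
      hme.neg_one_pow]
  · match m with
    | 0 => norm_num [fibZ, lucasZ, lucasNat]
    | (m+1) =>
      have hme : Even (m+1) := by
        have : Even ((m:ℤ)+1) := by
          have := hs.neg; push_cast at this ⊢; simpa using this
        exact_mod_cast this
      have h : (1 + 2*(-(↑(m+1):ℤ))) = -((2*m+1:ℕ):ℤ) := by push_cast; ring
      have h2 : (1 + (-(↑(m+1):ℤ))) = -((m:ℕ):ℤ) := by push_cast; ring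
      rw [h, h2, fibZ_neg_natCast, fibZ_neg_natCast, lucasZ_neg_natCast,
        fib_two_mul_sub_one_int]
      have h1 : ((-1:ℤ))^(2*m+1+1) = 1 := by
        have e : 2*m+1+1 = 2*(m+1) := by ring
        rw [e, pow_mul]; norm_num
      have h3 : ((-1:ℤ))^(m+1) = 1 := hme.neg_one_pow
      rw [h1, h3]
      ring

lemma fib_shift (s : ℤ) (hs : Even s) (x : ℤ) :
    fibZ (x + 2*s) = lucasZ s * fibZ (x + s) - fibZ x := by
  set P : ℤ → Prop := fun x => fibZ (x + 2*s) = lucasZ s * fibZ (x + s) - fibZ x with hP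
  have step_up : ∀ y : ℤ, P y → P (y+1) → P (y+2) := by
    intro y h1 h2
    have r1 := fibZ_rec' (y + 2*s) (y+1+2*s) (y+2+2*s) (by ring) (by ring)
    have r2 := fibZ_rec' (y + s) (y+1+s) (y+2+s) (by ring) (by ring)
    have r3 := fibZ_rec' y (y+1) (y+2) (by ring) (by ring)
    simp only [hP] at h1 h2 ⊢
    rw [r1, r2, r3, h1, h2]
    ring
  have step_down : ∀ y : ℤ, P (y+1) → P (y+2) → P y := by
    intro y h1 h2
    have r1 := fibZ_rec' (y + 2*s) (y+1+2*s) (y+2+2*s) (by ring) (by ring)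
    have r2 := fibZ_rec' (y + s) (y+1+s) (y+2+s) (by ring) (by ring)
    have r3 := fibZ_rec' y (y+1) (y+2) (by ring) (by ring)
    simp only [hP] at h1 h2 ⊢
    linear_combination h2 - h1 - r1 + lucasZ s * r2 - r3
  have base0 : P 0 := by
    simp only [hP, zero_add, fibZ_zero]
    rw [shift_zero]; ring
  have base1 : P 1 := by
    simp only [hP]
    rw [shift_one s hs, fibZ_one]
  have main : ∀ y : ℤ, P y ∧ P (y+1) := by
    intro y
    induction y using Int.induction_on with
    | zero => exact ⟨base0, base1⟩
    | succ k ih => exact ⟨ih.2, step_up k ih.1 ih.2⟩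
    | pred k ih =>
      refine ⟨step_down (-(k:ℤ)-1) ?_ ?_, ?_⟩
      · have : (-(k:ℤ)-1)+1 = -k := by ring
        rw [this]; exact ih.1
      · have : (-(k:ℤ)-1)+2 = -k+1 := by ring
        rw [this]; exact ih.2
      · have : (-(k:ℤ)-1)+1 = -k := by ring
        rw [this]; exact ih.1
  exact (main x).1

noncomputable def Dop (L : ℚ) (a : ℤ → ℚ) : ℤ → ℚ := fun z => L * a z - a (z+1)

lemma D_expand (L : ℚ) (m : ℕ) (a : ℤ → ℚ) (z : ℤ) :
    (Dop L)^[m] a z = ∑ j ∈ range (m+1), (m.choose j : ℚ) * (-1)^j * L^(m-j) * a (z+j) := by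
  induction m generalizing z with
  | zero => simp
  | succ m ih =>
    rw [Function.iterate_succ_apply']
    show L * ((Dop L)^[m] a z) - ((Dop L)^[m] a (z+1)) = _
    rw [ih z, ih (z+1)]
    rw [Finset.sum_range_succ' (fun j => ((m+1).choose j : ℚ) * (-1)^j * L^(m+1-j) * a (z+j)) (m+1)]
    have hsplit : ∀ i ∈ range (m+1),
        (((m+1).choose (i+1) : ℚ) * (-1)^(i+1) * L^(m+1-(i+1)) * a (z+((i+1:ℕ):ℤ)))
        = ((m.choose (i+1) : ℚ) * (-1)^(i+1) * L^(m-i) * a (z+((i+1:ℕ):ℤ)))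
          + (-1) * ((m.choose i : ℚ) * (-1)^i * L^(m-i) * a (z+1+i)) := by
      intro i hi
      have hc : ((m+1).choose (i+1) : ℚ) = (m.choose i : ℚ) + (m.choose (i+1) : ℚ) := by
        rw [Nat.choose_succ_succ]; push_cast; ring
      have hexp : m+1-(i+1) = m-i := by omega
      have harg : z + 1 + (i:ℤ) = z + ((i+1:ℕ):ℤ) := by push_cast; ring
      rw [hc, hexp, harg]
      push_cast
      ring
    rw [Finset.sum_congr rfl hsplit, Finset.sum_add_distrib]
    have hB : ∑ i ∈ range (m+1), ((m.choose (i+1) : ℚ) * (-1)^(i+1) * L^(m-i) * a (z+((i+1:ℕ):ℤ)))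
        = ∑ i ∈ range m, ((m.choose (i+1) : ℚ) * (-1)^(i+1) * L^(m-i) * a (z+((i+1:ℕ):ℤ))) := by
      rw [Finset.sum_range_succ]
      simp
    rw [hB]
    have hA : ∑ i ∈ range (m+1), (-1) * ((m.choose i : ℚ) * (-1)^i * L^(m-i) * a (z+1+i))
        = -(∑ j ∈ range (m+1), (m.choose j : ℚ) * (-1)^j * L^(m-j) * a (z+1+j)) := by
      rw [← Finset.sum_neg_distrib]
      exact Finset.sum_congr rfl (fun i _ => by ring)
    rw [hA]
    have hL : L * (∑ j ∈ range (m+1), (m.choose j : ℚ) * (-1)^j * L^(m-j) * a (z+j))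
        = ∑ i ∈ range m, ((m.choose (i+1) : ℚ) * (-1)^(i+1) * L^(m-i) * a (z+((i+1:ℕ):ℤ)))
          + L^(m+1) * a z := by
      rw [Finset.mul_sum, Finset.sum_range_succ' (fun j => L * ((m.choose j : ℚ) * (-1)^j * L^(m-j) * a (z+j))) m]
      congr 1
      · refine Finset.sum_congr rfl (fun i hi => ?_)
        have hexp : m - i = (m - (i+1)) + 1 := by
          simp only [Finset.mem_range] at hi; omega
        rw [hexp, pow_succ]
        ring
      · simp [pow_succ]
        ring
    rw [hL]
    norm_num
    ring

lemma key1 (L : ℚ) (m : ℕ) (a : ℤ → ℚ) (ha : ∀ y, L * a (y+1) - a (y+2) = a y) (x : ℤ) :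
    (Dop L)^[m] a (x + m) = a x := by
  induction m generalizing a x with
  | zero => simp
  | succ m ih =>
    rw [Function.iterate_succ_apply]
    have hb : ∀ y, L * (Dop L a) (y+1) - (Dop L a) (y+2) = Dop L a y := by
      intro y
      show L * (L * a (y+1) - a (y+1+1)) - (L * a (y+2) - a (y+2+1)) = L * a y - a (y+1)
      have hy1 := ha (y+1)
      rw [show y+1+1 = y+2 from by ring] at hy1 ⊢
      rw [show y+1+2 = y+3 from by ring] at hy1
      rw [show y+2+1 = y+3 from by ring]
      linear_combination L * ha y - hy1
    have e : x + ((m:ℤ)+1) = (x+1) + m := by ring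
    push_cast
    rw [e, ih (Dop L a) hb (x+1)]
    show L * a (x+1) - a (x+1+1) = a x
    rw [show x+1+1 = x+2 from by ring]
    exact ha x

lemma key1' (L : ℚ) (m : ℕ) (a : ℤ → ℚ) (ha : ∀ y, L * a (y+1) - a (y+2) = a y) (x : ℤ) :
    ∑ j ∈ range (m+1), (m.choose j : ℚ) * (-1)^j * L^(m-j) * a (x + m + j) = a x := by
  rw [← D_expand, key1 L m a ha x]

lemma key2 (L : ℚ) (m : ℕ) (a : ℤ → ℚ) (ha : ∀ y, L * a (y+1) - a (y+2) = a y) (x : ℤ) :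
    ∑ j ∈ range (m+1), (j : ℚ) * (m.choose j : ℚ) * (-1)^j * L^(m-j) * a (x + m + j)
      = -(m : ℚ) * a (x+2) := by
  match m with
  | 0 => simp
  | (m+1) =>
    rw [Finset.sum_range_succ'
      (fun j => (j : ℚ) * (((m+1).choose j : ℕ) : ℚ) * (-1)^j * L^(m+1-j) * a (x + ((m+1:ℕ):ℤ) + j)) (m+1)]
    have hterm : ∀ i ∈ range (m+1),
        (((i+1:ℕ) : ℚ) * (((m+1).choose (i+1) : ℕ) : ℚ) * (-1)^(i+1) * L^(m+1-(i+1)) * a (x + ((m+1:ℕ):ℤ) + ((i+1:ℕ):ℤ)))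
        = (-((m:ℚ)+1)) * ((m.choose i : ℚ) * (-1)^i * L^(m-i) * a ((x+2) + m + i)) := by
      intro i hi
      have hc : ((i+1) * (m+1).choose (i+1) : ℕ) = ((m+1) * m.choose i : ℕ) := by
        exact (mul_comm (i+1) _).trans (Nat.add_one_mul_choose_eq m i).symm
      have hc' : (((i+1) * (m+1).choose (i+1) : ℕ) : ℚ) = (((m+1) * m.choose i : ℕ) : ℚ) := by
        exact_mod_cast congrArg (fun v : ℕ => (v : ℚ)) hc
      push_cast at hc'
      have hexp : m+1-(i+1) = m-i := by omega
      have harg : x + ((m+1:ℕ):ℤ) + ((i+1:ℕ):ℤ) = (x+2) + m + i := by push_cast; ring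
      rw [hexp, harg]
      push_cast
      linear_combination (-(-1:ℚ)^i * L^(m-i) * a ((x+2) + (m:ℤ) + (i:ℤ))) * hc'
    rw [Finset.sum_congr rfl hterm, ← Finset.mul_sum,
      key1' L m a ha (x+2)]
    norm_num

lemma key3 (L : ℚ) (m : ℕ) (a : ℤ → ℚ) (ha : ∀ y, L * a (y+1) - a (y+2) = a y) (x : ℤ) :
    ∑ j ∈ range (m+1), ((j : ℚ) - 1) * (m.choose j : ℚ) * (-1)^j * L^(m-j) * a (x + m + j)
      = -a x - (m : ℚ) * a (x+2) := by
  have hsplit : ∀ j ∈ range (m+1),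
      ((j : ℚ) - 1) * (m.choose j : ℚ) * (-1)^j * L^(m-j) * a (x + m + j)
      = (j : ℚ) * (m.choose j : ℚ) * (-1)^j * L^(m-j) * a (x + m + j)
        - (m.choose j : ℚ) * (-1)^j * L^(m-j) * a (x + m + j) := by
    intro j hj; ring
  rw [Finset.sum_congr rfl hsplit, Finset.sum_sub_distrib, key2 L m a ha x, key1' L m a ha x]
  ring

lemma choose_quad (n k : ℕ) :
    ((k:ℚ)+1) * ((k:ℚ)+2) * ((n+2).choose (k+2) : ℚ) = ((n:ℚ)+1) * ((n:ℚ)+2) * (n.choose k : ℚ) := by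
  have h1 : ((n+1) * n.choose k : ℕ) = ((n+1).choose (k+1) * (k+1) : ℕ) := Nat.add_one_mul_choose_eq n k
  have h2 : ((n+2) * (n+1).choose (k+1) : ℕ) = ((n+2).choose (k+2) * (k+2) : ℕ) :=
    Nat.add_one_mul_choose_eq (n+1) (k+1)
  have h1q : ((n:ℚ)+1) * (n.choose k : ℚ) = ((n+1).choose (k+1) : ℚ) * ((k:ℚ)+1) := by
    exact_mod_cast congrArg (fun v : ℕ => (v : ℚ)) h1
  have h2q : ((n:ℚ)+2) * ((n+1).choose (k+1) : ℚ) = ((n+2).choose (k+2) : ℚ) * ((k:ℚ)+2) := by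
    exact_mod_cast congrArg (fun v : ℕ => (v : ℚ)) h2
  linear_combination (-((k:ℚ)+1)) * h2q + (-((n:ℚ)+2)) * h1q

theorem stmt_16 (s t : ℤ) (hs : Even s) (n : ℕ) :
    ∑ k ∈ range (n + 1),
      (n.choose k : ℚ) * (-1) ^ k * (lucasZ s : ℚ) ^ (n - k) *
        (fibZ (2 * s * (k + 2) + s * ((n : ℤ) - k) + t) : ℚ) / (k + 2) =
    ((lucasZ s : ℚ) ^ (n + 2) * (fibZ (s * (n + 2) + t) : ℚ) - fibZ t) / ((n + 1) * (n + 2)) -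
    (fibZ (2 * s + t) : ℚ) / (n + 1) := by
  set L : ℚ := ((lucasZ s : ℤ) : ℚ) with hLdef
  set a : ℤ → ℚ := fun m => ((fibZ (s*m + t) : ℤ) : ℚ) with hAdef
  have ha : ∀ y, L * a (y+1) - a (y+2) = a y := by
    intro y
    have h := fib_shift s hs (s*y + t)
    have e2 : s*(y+2)+t = s*y+t+2*s := by ring
    have e1 : s*(y+1)+t = s*y+t+s := by ring
    simp only [hAdef, e1, e2, h]
    push_cast
    ring
  have hkey := key3 L (n+2) a ha 0
  rw [Finset.sum_range_succ'
    (fun j => ((j : ℚ) - 1) * (((n+2).choose j : ℕ) : ℚ) * (-1)^j * L^(n+2-j) * a (0 + ((n+2:ℕ):ℤ) + j)) (n+2),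
    Finset.sum_range_succ'] at hkey
  have hf1 : (((0+1 : ℕ) : ℚ) - 1) * (((n+2).choose (0+1) : ℕ) : ℚ) * (-1)^(0+1) * L^(n+2-(0+1)) * a (0 + ((n+2:ℕ):ℤ) + ((0+1:ℕ):ℤ)) = 0 := by
    norm_num
  have hf0 : (((0 : ℕ) : ℚ) - 1) * (((n+2).choose 0 : ℕ) : ℚ) * (-1)^(0:ℕ) * L^(n+2-0) * a (0 + ((n+2:ℕ):ℤ) + ((0:ℕ):ℤ)) = -(L^(n+2) * a ((n:ℤ)+2)) := by
    norm_num
  rw [hf1, hf0] at hkey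
  have hsum : ∑ k ∈ range (n+1),
      (((k+1+1:ℕ):ℚ) - 1) * (((n+2).choose (k+1+1) : ℕ):ℚ) * (-1)^(k+1+1) * L^(n+2-(k+1+1))
        * a (0 + ((n+2:ℕ):ℤ) + ((k+1+1:ℕ):ℤ))
      = L^(n+2) * a ((n:ℤ)+2) - a 0 - ((n+2:ℕ):ℚ) * a (0+2) := by
    linarith [hkey]
  have hD : (((n:ℚ)+1)*((n:ℚ)+2)) ≠ 0 := by positivity
  have hstep : ∀ k ∈ range (n+1),
      (n.choose k : ℚ) * (-1)^k * L^(n-k) * ((fibZ (2*s*((k:ℤ)+2)+s*((n:ℤ)-(k:ℤ))+t) : ℤ):ℚ) / ((k:ℚ)+2)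
      = ((((k+1+1:ℕ)):ℚ) - 1) * (((n+2).choose (k+1+1) : ℕ):ℚ) * (-1)^(k+1+1) * L^(n+2-(k+1+1))
          * a (0 + ((n+2:ℕ):ℤ) + ((k+1+1:ℕ):ℤ)) * (1/(((n:ℚ)+1)*((n:ℚ)+2))) := by
    intro k hk
    have hexp : n+2-(k+1+1) = n-k := by omega
    have hpow : ((-1:ℚ))^(k+1+1) = (-1)^k := by rw [pow_succ, pow_succ]; ring
    have harg : s * ((0:ℤ) + ((n+2:ℕ):ℤ) + ((k+1+1:ℕ):ℤ)) + t
        = 2*s*((k:ℤ)+2)+s*((n:ℤ)-(k:ℤ))+t := by push_cast; ring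
    have hfib : a (0 + ((n+2:ℕ):ℤ) + ((k+1+1:ℕ):ℤ))
        = ((fibZ (2*s*((k:ℤ)+2)+s*((n:ℤ)-(k:ℤ))+t) : ℤ):ℚ) := by
      simp only [hAdef]
      rw [harg]
    rw [hexp, hpow, hfib]
    have hk2 : ((k:ℚ)+2) ≠ 0 := by positivity
    have hcq := choose_quad n k
    rw [show k+1+1 = k+2 from rfl]
    push_cast
    field_simp
    linear_combination (-(L^(n-k) * ((fibZ (2*s*((k:ℤ)+2)+s*((n:ℤ)-(k:ℤ))+t) : ℤ):ℚ))) * hcq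
  rw [Finset.sum_congr rfl hstep, ← Finset.sum_mul, hsum]
  have ha0 : a 0 = ((fibZ t : ℤ):ℚ) := by
    simp only [hAdef]
    norm_num
  have ha2 : a (0+2) = ((fibZ (2*s+t) : ℤ):ℚ) := by
    simp only [hAdef]
    rw [show s*(0+2)+t = 2*s+t from by ring]
  rw [ha0, ha2]
  have hne1 : ((n:ℚ)+1) ≠ 0 := by positivity
  have hne2 : ((n:ℚ)+2) ≠ 0 := by positivity
  field_simp
  simp only [hAdef]
  push_cast
  ring
end
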